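/- Let R → S = R/a be a surjection of noetherian local rings with R a-adically complete, M a finite length S-module, and {M_n}_{n≥1} a lifting system for M along the surjection with associated lift L = lim←_n M_n. Then for each n ≥ 1, L ⊗_R R/a^n ≅ M_n, and the minimal number of generators of L over R equals the minimal number of generators of M_n over R for every n ≥ 1. -/

import Mathlib

/-- The inverse limit of an inverse system of modules `… → M (n+1) → M n → … → M 0`,
realized as the submodule of the product consisting of compatible sequences. -/
def invLim {R : Type*} [Semiring R] {M : ℕ → Type*} [∀ n, AddCommMonoid (M n)]
    [∀ n, Module R (M n)] (f : ∀ n, M (n + 1) →ₗ[R] M n) : Submodule R (∀ n, M n) where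
  carrier := {x | ∀ n, f n (x (n + 1)) = x n}
  add_mem' := by intro x y hx hy n; simp [hx n, hy n]
  zero_mem' := by intro n; simp
  smul_mem' := by intro c x hx n; simp [hx n]


/-- The minimal number of generators of an `R`-module. -/
noncomputable def minGen (R : Type*) [Semiring R] (M : Type*) [AddCommMonoid M]
    [Module R M] : ℕ :=
  sInf {k | ∃ s : Finset M, s.card = k ∧ Submodule.span R (s : Set M) = ⊤}

section aux
variable {R : Type*} [CommRing R] {M : ℕ → Type*} [∀ n, AddCommGroup (M n)]
    [∀ n, Module R (M n)] (f : ∀ n, M (n + 1) →ₗ[R] M n)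

theorem mem_invLim {x : ∀ n, M n} : x ∈ invLim f ↔ ∀ n, f n (x (n + 1)) = x n := Iff.rfl

/-- Composite of transition maps `M n →ₗ M m` for `m ≤ n`. -/
def chain {m n : ℕ} (h : m ≤ n) : M n →ₗ[R] M m :=
  Nat.leRecOn h (fun {k} g => g ∘ₗ f k) LinearMap.id

theorem chain_self {m : ℕ} (h : m ≤ m) : chain f h = LinearMap.id := Nat.leRecOn_self _

theorem chain_succ {m n : ℕ} (h : m ≤ n) (h' : m ≤ n + 1) :
    chain f h' = (chain f h) ∘ₗ f n := Nat.leRecOn_succ h _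

theorem chain_pre {m n : ℕ} (h : m + 1 ≤ n) (h' : m ≤ n) :
    (f m) ∘ₗ chain f h = chain (n := n) f h' := by
  induction n, h using Nat.le_induction with
  | base =>
    rw [chain_self, chain_succ f (le_refl m) h']
    ext x; simp [chain_self]
  | succ n hmn ih =>
    rw [chain_succ f hmn, chain_succ f (le_trans (Nat.le_succ m) hmn),
      ← LinearMap.comp_assoc, ih (le_trans (Nat.le_succ m) hmn)]

theorem chain_apply_mem {x : ∀ k, M k} (hx : x ∈ invLim f) {m n : ℕ} (h : m ≤ n) :
    chain f h (x n) = x m := by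
  induction n, h using Nat.le_induction with
  | base => rw [chain_self]; rfl
  | succ n hmn ih => rw [chain_succ f hmn, LinearMap.comp_apply, hx n, ih]

end aux

section aux2
variable {R : Type*} [CommRing R] {M : ℕ → Type*} [∀ n, AddCommGroup (M n)]
    [∀ n, Module R (M n)] (f : ∀ n, M (n + 1) →ₗ[R] M n)

/-- Projection from the inverse limit to a component. -/
def lproj (n : ℕ) : ↥(invLim f) →ₗ[R] M n := (LinearMap.proj n) ∘ₗ (invLim f).subtype

@[simp] theorem lproj_apply (n : ℕ) (x : ↥(invLim f)) : lproj f n x = x.1 n := rfl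

theorem lproj_surjective (hsurj : ∀ n, Function.Surjective (f n)) (n : ℕ) :
    Function.Surjective (lproj f n) := by
  intro m
  have hs : ∀ k (y : M k), f k (Function.surjInv (hsurj k) y) = y :=
    fun k y => Function.surjInv_eq (hsurj k) y
  let w : ∀ k, M (n + k) := fun k => Nat.rec m (fun k wk => Function.surjInv (hsurj (n + k)) wk) k
  have hw : ∀ k, f (n + k) (w (k + 1)) = w k := fun k => hs (n + k) (w k)
  have hmem : (fun k => chain f (Nat.le_add_left k n) (w k)) ∈ invLim f := by
    intro k
    have h2 : k ≤ n + (k + 1) := Nat.le_succ_of_le (Nat.le_add_left k n)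
    have h1 : f k (chain f (Nat.le_add_left (k+1) n) (w (k+1)))
        = chain f h2 (w (k+1)) := by
      rw [← chain_pre f (Nat.le_add_left (k+1) n) h2]
      rfl
    rw [h1, chain_succ f (Nat.le_add_left k n) h2, LinearMap.comp_apply]
    exact congrArg _ (hw k)
  have hval : ∀ k (h : n ≤ n + k), chain f h (w k) = m := by
    intro k
    induction k with
    | zero => intro h; rw [chain_self]; rfl
    | succ k ih =>
      intro h
      rw [chain_succ f (Nat.le_add_right n k) h, LinearMap.comp_apply]
      exact (congrArg _ (hw k)).trans (ih (Nat.le_add_right n k))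
  exact ⟨⟨_, hmem⟩, hval n (Nat.le_add_left n n)⟩

theorem smul_top_eq_bot {X : Type*} [AddCommGroup X] [Module R X] {I : Ideal R}
    (h : I ≤ Module.annihilator R X) : I • (⊤ : Submodule R X) = ⊥ := by
  rw [eq_bot_iff]
  refine Submodule.smul_le.2 fun r hr x _ => ?_
  simpa using Module.mem_annihilator.1 (h hr) x

theorem ideal_smul_top (I : Ideal R) : I • (⊤ : Submodule R R) = I := by
  refine le_antisymm (Submodule.smul_le.2 fun r hr x _ => ?_) (fun x hx => ?_)
  · simpa [smul_eq_mul] using I.mul_mem_right x hr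
  · simpa using Submodule.smul_mem_smul hx (Submodule.mem_top (x := (1:R)))

end aux2

section aux3
variable {R : Type*} [CommRing R]

theorem exists_rep_of_mem_span_smul {X : Type*} [AddCommGroup X] [Module R X]
    (T : Finset R) (P : Submodule R X) {z : X}
    (hz : z ∈ Ideal.span (↑T : Set R) • P) :
    ∃ u : R → X, (∀ t, u t ∈ P) ∧ z = ∑ t ∈ T, t • u t := by
  refine Submodule.smul_induction_on hz ?_ ?_
  · intro r hr p hp
    obtain ⟨c, -, hc⟩ := Submodule.mem_span_finset.1 hr
    refine ⟨fun t => c t • p, fun t => P.smul_mem _ hp, ?_⟩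
    rw [← hc, Finset.sum_smul]
    exact Finset.sum_congr rfl fun t _ => by rw [smul_eq_mul, mul_comm, mul_smul]
  · rintro x y ⟨u, hu, rfl⟩ ⟨v, hv, rfl⟩
    exact ⟨fun t => u t + v t, fun t => P.add_mem (hu t) (hv t), by
      rw [← Finset.sum_add_distrib]
      exact Finset.sum_congr rfl fun t _ => (smul_add ..).symm⟩

theorem exists_rep_of_mem_smul_span {X : Type*} [AddCommGroup X] [Module R X]
    (I : Ideal R) (s : Finset X) {z : X}
    (hz : z ∈ I • Submodule.span R (↑s : Set X)) :
    ∃ c : X → R, (∀ w, c w ∈ I) ∧ z = ∑ w ∈ s, c w • w := by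
  refine Submodule.smul_induction_on hz ?_ ?_
  · intro r hr p hp
    obtain ⟨d, -, hd⟩ := Submodule.mem_span_finset.1 hp
    exact ⟨fun w => r * d w, fun w => I.mul_mem_right _ hr, by
      rw [← hd, Finset.smul_sum]
      exact Finset.sum_congr rfl fun w _ => (mul_smul ..).symm⟩
  · rintro x y ⟨c, hc, rfl⟩ ⟨d, hd, rfl⟩
    exact ⟨fun w => c w + d w, fun w => I.add_mem (hc w) (hd w), by
      rw [← Finset.sum_add_distrib]
      exact Finset.sum_congr rfl fun w _ => (add_smul ..).symm⟩

end aux3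

section aux4
variable {R : Type*} [CommRing R] (a : Ideal R)
    {M : ℕ → Type*} [∀ n, AddCommGroup (M n)] [∀ n, Module R (M n)]
    (f : ∀ n, M (n + 1) →ₗ[R] M n)

theorem chain_kill (hann : ∀ n, a ^ (n + 1) ≤ Module.annihilator R (M n))
    {m n : ℕ} (h : m ≤ n) {v : M n}
    (hv : v ∈ (a ^ (m + 1)) • (⊤ : Submodule R (M n))) : chain f h v = 0 := by
  have h2 : chain f h v ∈ Submodule.map (chain f h) ((a ^ (m+1)) • ⊤) :=
    Submodule.mem_map_of_mem hv
  rw [Submodule.map_smul''] at h2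
  have h1 : chain f h v ∈ (a ^ (m+1)) • (⊤ : Submodule R (M m)) :=
    Submodule.smul_mono le_rfl le_top h2
  rw [smul_top_eq_bot (hann m)] at h1
  simpa using h1

theorem coe_sum_apply (T : Finset R) (g : R → ↥(invLim f)) (k : ℕ) :
    ((∑ t ∈ T, t • g t : ↥(invLim f)) : ∀ j, M j) k = ∑ t ∈ T, t • ((g t : ∀ j, M j) k) := by
  simp

theorem smul_top_le_ker_lproj (hann : ∀ n, a ^ (n + 1) ≤ Module.annihilator R (M n)) (n : ℕ) :
    (a ^ (n+1)) • (⊤ : Submodule R ↥(invLim f)) ≤ LinearMap.ker (lproj f n) := by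
  refine Submodule.smul_le.2 fun r hr z _ => ?_
  rw [LinearMap.mem_ker, map_smul, lproj_apply]
  exact Module.mem_annihilator.1 (hann n hr) _

theorem ker_lproj_le [IsNoetherianRing R]
    (hann : ∀ n, a ^ (n + 1) ≤ Module.annihilator R (M n))
    (hsurj : ∀ n, Function.Surjective (f n))
    (hker : ∀ n, LinearMap.ker (f n) = (a ^ (n + 1)) • (⊤ : Submodule R (M (n + 1))))
    (n : ℕ) :
    LinearMap.ker (lproj f n) ≤ (a ^ (n+1)) • (⊤ : Submodule R ↥(invLim f)) := by
  classical
  obtain ⟨T, hT⟩ : (a ^ (n+1)).FG := IsNoetherian.noetherian _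
  intro x hx
  rw [LinearMap.mem_ker, lproj_apply] at hx
  have key : ∀ (m : ℕ) (z : ↥(invLim f)), (∀ k, k ≤ n + m → (z : ∀ j, M j) k = 0) →
      ∃ d : R → ↥(invLim f), (∀ t k, k < m → ((d t : ↥(invLim f)) : ∀ j, M j) k = 0) ∧
        (∀ k, k ≤ n + m + 1 → ((z - ∑ t ∈ T, t • d t : ↥(invLim f)) : ∀ j, M j) k = 0) := by
    intro m z hz
    have hzm : (z : ∀ j, M j) (n + m + 1)
        ∈ Ideal.span (↑T : Set R) • ((a ^ m) • (⊤ : Submodule R (M (n + m + 1)))) := by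
      have h1 : (z : ∀ j, M j) (n+m+1) ∈ LinearMap.ker (f (n+m)) := by
        rw [LinearMap.mem_ker, z.2 (n+m), hz (n+m) le_rfl]
      rw [hker (n+m)] at h1
      have hpow : a ^ (n + m + 1) = Ideal.span (↑T) * a ^ m := by
        rw [hT, ← pow_add]
        congr 1
        omega
      rw [hpow, mul_smul] at h1
      exact h1
    obtain ⟨u, hu, huz⟩ := exists_rep_of_mem_span_smul T _ hzm
    choose dd hdd using fun t => lproj_surjective f hsurj (n+m+1) (u t)
    refine ⟨dd, ?_, ?_⟩
    · intro t k hk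
      have hchain : ((dd t : ↥(invLim f)) : ∀ j, M j) k
          = chain f (show k ≤ n+m+1 by omega) (((dd t : ↥(invLim f)) : ∀ j, M j) (n+m+1)) :=
        (chain_apply_mem f (dd t).2 _).symm
      rw [hchain]
      have hu' : ((dd t : ↥(invLim f)) : ∀ j, M j) (n+m+1) ∈ (a ^ (k+1)) • (⊤ : Submodule R (M (n+m+1))) := by
        have := hdd t
        rw [lproj_apply] at this
        rw [this]
        exact Submodule.smul_mono_left (Ideal.pow_le_pow_right (by omega)) (hu t)
      exact chain_kill a f hann _ hu'
    · intro k hk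
      have hz' : ((z - ∑ t ∈ T, t • dd t : ↥(invLim f)) : ∀ j, M j) (n+m+1) = 0 := by
        have hc : ((z - ∑ t ∈ T, t • dd t : ↥(invLim f)) : ∀ j, M j) (n+m+1)
            = (z : ∀ j, M j) (n+m+1) - ∑ t ∈ T, t • ((dd t : ↥(invLim f)) : ∀ j, M j) (n+m+1) := by
          simp
        rw [hc]
        have : ∀ t ∈ T, t • ((dd t : ↥(invLim f)) : ∀ j, M j) (n+m+1) = t • u t := by
          intro t _
          have := hdd t
          rw [lproj_apply] at this
          rw [this]
        rw [Finset.sum_congr rfl this, ← huz, sub_self]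
      have hcc : ((z - ∑ t ∈ T, t • dd t : ↥(invLim f)) : ∀ j, M j) k
          = chain f hk (((z - ∑ t ∈ T, t • dd t : ↥(invLim f)) : ∀ j, M j) (n+m+1)) :=
        (chain_apply_mem f (z - ∑ t ∈ T, t • dd t).2 _).symm
      rw [hcc, hz', map_zero]
  -- recursive construction
  have h0 : ∀ k, k ≤ n + 0 → (x : ∀ j, M j) k = 0 := by
    intro k hk
    rw [← chain_apply_mem f x.2 (show k ≤ n from hk), hx, map_zero]
  let P : ℕ → Type _ := fun m => {z : ↥(invLim f) // ∀ k, k ≤ n + m → (z : ∀ j, M j) k = 0}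
  let step : ∀ m, P m → (R → ↥(invLim f)) × P (m+1) := fun m p =>
    ⟨(key m p.1 p.2).choose,
     ⟨p.1 - ∑ t ∈ T, t • (key m p.1 p.2).choose t,
      fun k hk => (key m p.1 p.2).choose_spec.2 k hk⟩⟩
  let seq : ∀ m, P m := fun m => Nat.rec ⟨x, h0⟩ (fun m p => (step m p).2) m
  let D : ℕ → R → ↥(invLim f) := fun m => (step m (seq m)).1
  have hseq_succ : ∀ m, (seq (m+1)).1 = (seq m).1 - ∑ t ∈ T, t • D m t := fun m => rfl
  have hD0 : ∀ m t k, k < m → ((D m t : ↥(invLim f)) : ∀ j, M j) k = 0 :=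
    fun m => (key m (seq m).1 (seq m).2).choose_spec.1
  have hymem : ∀ t, (fun k => ∑ m ∈ Finset.range (k+1), ((D m t : ↥(invLim f)) : ∀ j, M j) k)
      ∈ invLim f := by
    intro t k
    show f k (∑ m ∈ Finset.range (k+2), ((D m t : ↥(invLim f)) : ∀ j, M j) (k+1)) = _
    rw [map_sum]
    have he : ∀ m ∈ Finset.range (k+2),
        f k (((D m t : ↥(invLim f)) : ∀ j, M j) (k+1)) = ((D m t : ↥(invLim f)) : ∀ j, M j) k :=
      fun m _ => (D m t).2 k
    rw [Finset.sum_congr rfl he, Finset.sum_range_succ, hD0 (k+1) t k (by omega), add_zero]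
  let y : R → ↥(invLim f) := fun t => ⟨_, hymem t⟩
  have hxy : x = ∑ t ∈ T, t • y t := by
    apply Subtype.ext; funext k
    rw [coe_sum_apply]
    show (x : ∀ j, M j) k
        = ∑ t ∈ T, t • ∑ m ∈ Finset.range (k+1), ((D m t : ↥(invLim f)) : ∀ j, M j) k
    have swap : ∑ t ∈ T, t • ∑ m ∈ Finset.range (k+1), ((D m t : ↥(invLim f)) : ∀ j, M j) k
        = ∑ m ∈ Finset.range (k+1), ∑ t ∈ T, t • ((D m t : ↥(invLim f)) : ∀ j, M j) k := by
      simp_rw [Finset.smul_sum]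
      exact Finset.sum_comm
    rw [swap]
    have tele : ∀ m, ∑ t ∈ T, t • ((D m t : ↥(invLim f)) : ∀ j, M j) k
        = ((seq m).1 : ∀ j, M j) k - ((seq (m+1)).1 : ∀ j, M j) k := by
      intro m
      have hc : ((seq (m+1)).1 : ∀ j, M j) k
          = ((seq m).1 : ∀ j, M j) k - ∑ t ∈ T, t • ((D m t : ↥(invLim f)) : ∀ j, M j) k := by
        have h' := congrFun (congrArg (Subtype.val) (hseq_succ m)) k
        rw [h']
        simp
      rw [hc]
      exact (sub_sub_cancel _ _).symm
    rw [Finset.sum_congr rfl (fun m _ => tele m), Finset.sum_range_sub']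
    have h2 : ((seq (k+1)).1 : ∀ j, M j) k = 0 := (seq (k+1)).2 k (by omega)
    show (x : ∀ j, M j) k = ((seq 0).1 : ∀ j, M j) k - _
    rw [h2, sub_zero]
    rfl
  rw [hxy]
  exact Submodule.sum_mem _ fun t ht =>
    Submodule.smul_mem_smul (hT ▸ Ideal.subset_span ht) Submodule.mem_top

end aux4

section aux5
variable {R : Type*} [CommRing R] (a : Ideal R) [IsPrecomplete a R]
    {X : Type*} [AddCommGroup X] [Module R X]

theorem span_eq_top_of_sup
    (hH : ∀ v : X, (∀ m : ℕ, v ∈ (a ^ m : Ideal R) • (⊤ : Submodule R X)) → v = 0)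
    (s : Finset X) (hs : Submodule.span R (↑s : Set X) ⊔ a • ⊤ = ⊤) :
    Submodule.span R (↑s : Set X) = ⊤ := by
  classical
  rw [eq_top_iff]
  intro x _
  have claim : ∀ m (z : X), z ∈ (a ^ m) • (⊤ : Submodule R X) →
      ∃ c : X → R, (∀ w, c w ∈ a ^ m) ∧
        z - ∑ w ∈ s, c w • w ∈ (a ^ (m+1)) • (⊤ : Submodule R X) := by
    intro m z hz
    have hdec : (a ^ m) • (⊤ : Submodule R X)
        = (a ^ m) • Submodule.span R (↑s : Set X) ⊔ (a ^ (m+1)) • ⊤ := by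
      conv_lhs => rw [← hs]
      rw [Submodule.smul_sup, ← mul_smul, ← pow_succ]
    rw [hdec] at hz
    obtain ⟨u, hu, v, hv, rfl⟩ := Submodule.mem_sup.1 hz
    obtain ⟨c, hc, rfl⟩ := exists_rep_of_mem_smul_span (a ^ m) s hu
    exact ⟨c, hc, by simpa using hv⟩
  let P : ℕ → Type _ := fun m => {z : X // z ∈ (a ^ m) • (⊤ : Submodule R X)}
  have h0 : x ∈ (a ^ 0) • (⊤ : Submodule R X) := by
    rw [pow_zero, Ideal.one_eq_top, Submodule.top_smul]; trivial
  let step : ∀ m, P m → (X → R) × P (m+1) := fun m p =>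
    ⟨(claim m p.1 p.2).choose,
     ⟨p.1 - ∑ w ∈ s, (claim m p.1 p.2).choose w • w, (claim m p.1 p.2).choose_spec.2⟩⟩
  let seq : ∀ m, P m := fun m => Nat.rec ⟨x, h0⟩ (fun m p => (step m p).2) m
  let c : ℕ → X → R := fun m => (step m (seq m)).1
  have hseq : ∀ m, (seq (m+1)).1 = (seq m).1 - ∑ w ∈ s, c m w • w := fun m => rfl
  have hcm : ∀ m w, c m w ∈ a ^ m := fun m => (claim m (seq m).1 (seq m).2).choose_spec.1
  let b : ℕ → X → R := fun m w => ∑ j ∈ Finset.range m, c j w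
  have hb : ∀ m, x - ∑ w ∈ s, b m w • w = (seq m).1 := by
    intro m
    induction m with
    | zero =>
      simp only [b, Finset.range_zero, Finset.sum_empty, zero_smul, Finset.sum_const_zero, sub_zero]
      rfl
    | succ m ih =>
      rw [hseq m, ← ih]
      have hsum : ∑ w ∈ s, b (m+1) w • w = ∑ w ∈ s, b m w • w + ∑ w ∈ s, c m w • w := by
        rw [← Finset.sum_add_distrib]
        refine Finset.sum_congr rfl fun w _ => ?_
        rw [← add_smul]
        congr 1
        simp only [b]
        rw [Finset.sum_range_succ]
      rw [hsum, sub_add_eq_sub_sub]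
  have hcauchy : ∀ w, ∀ {m m' : ℕ}, m ≤ m' →
      b m w ≡ b m' w [SMOD (a ^ m • ⊤ : Submodule R R)] := by
    intro w m m' h
    rw [SModEq.sub_mem, ideal_smul_top]
    have hbb : b m w - b m' w = -(∑ j ∈ Finset.Ico m m', c j w) := by
      have := Finset.sum_Ico_eq_sub (fun j => c j w) h
      rw [this]
      abel
    rw [hbb]
    exact neg_mem (Submodule.sum_mem _ fun j hj =>
      Ideal.pow_le_pow_right (Finset.mem_Ico.1 hj).1 (hcm j w))
  choose r hr using fun w : X =>
    IsPrecomplete.prec ‹IsPrecomplete a R› (fun {m m'} h => hcauchy w h)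
  have hfinal : ∀ m, x - ∑ w ∈ s, r w • w ∈ (a ^ m) • (⊤ : Submodule R X) := by
    intro m
    have hsplit : ∑ w ∈ s, (b m w - r w) • w = ∑ w ∈ s, b m w • w - ∑ w ∈ s, r w • w := by
      simp_rw [sub_smul]
      exact Finset.sum_sub_distrib _ _
    have heq : x - ∑ w ∈ s, r w • w = (seq m).1 + ∑ w ∈ s, (b m w - r w) • w := by
      rw [hsplit, ← hb m]
      abel
    rw [heq]
    refine Submodule.add_mem _ (seq m).2 (Submodule.sum_mem _ fun w _ => ?_)
    have hbr : b m w - r w ∈ a ^ m := by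
      have h2 := hr w m
      rw [SModEq.sub_mem, ideal_smul_top] at h2
      exact h2
    exact Submodule.smul_mem_smul hbr Submodule.mem_top
  have hzero := hH _ hfinal
  rw [sub_eq_zero] at hzero
  rw [hzero]
  exact Submodule.sum_mem _ fun w hw => Submodule.smul_mem _ _ (Submodule.subset_span hw)

end aux5

/-- With `R → S = R/a` a surjection of noetherian local rings, `R`
`a`-adically complete, and `{Mₙ}` a lifting system for a finite length `S`-module
(indexed from `0`), the associated lift `L = lim← M n` satisfies
`L ⊗_R R/a^(n+1) ≅ M n` for every `n`, and the minimal number of generators of `L`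
over `R` equals that of each `M n`. -/
theorem stmt6 (R : Type*) [CommRing R] [IsNoetherianRing R] [IsLocalRing R]
    (a : Ideal R) [IsAdicComplete a R]
    (M : ℕ → Type*) [∀ n, AddCommGroup (M n)] [∀ n, Module R (M n)]
    (hfl : ∀ n, IsFiniteLength R (M n))
    (hann : ∀ n, a ^ (n + 1) ≤ Module.annihilator R (M n))
    (f : ∀ n, M (n + 1) →ₗ[R] M n)
    (hsurj : ∀ n, Function.Surjective (f n))
    (hker : ∀ n, LinearMap.ker (f n) = (a ^ (n + 1)) • (⊤ : Submodule R (M (n + 1)))) :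
    ∀ n, Nonempty ((↥(invLim f) ⧸ ((a ^ (n + 1)) • (⊤ : Submodule R ↥(invLim f)))) ≃ₗ[R] M n)
      ∧ minGen R ↥(invLim f) = minGen R (M n) := by
  intro n
  have hkerp : LinearMap.ker (lproj f n) = (a ^ (n+1)) • (⊤ : Submodule R ↥(invLim f)) :=
    le_antisymm (ker_lproj_le a f hann hsurj hker n) (smul_top_le_ker_lproj a f hann n)
  have hsurjp := lproj_surjective f hsurj n
  have hH : ∀ v : ↥(invLim f),
      (∀ m : ℕ, v ∈ (a ^ m : Ideal R) • (⊤ : Submodule R ↥(invLim f))) → v = 0 := by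
    intro v hv
    apply Subtype.ext; funext k
    have h1 : v ∈ LinearMap.ker (lproj f k) := smul_top_le_ker_lproj a f hann k (hv (k+1))
    have h2 := LinearMap.mem_ker.1 h1
    rw [lproj_apply] at h2
    simpa using h2
  constructor
  · exact ⟨(Submodule.quotEquivOfEq _ _ hkerp.symm).trans
      (LinearMap.quotKerEquivOfSurjective _ hsurjp)⟩
  · classical
    have hnoeth : IsNoetherian R (M n) := (isFiniteLength_iff_isNoetherian_isArtinian.mp (hfl n)).1
    obtain ⟨t0, ht0⟩ : (⊤ : Submodule R (M n)).FG := IsNoetherian.noetherian ⊤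
    have hMne : {k | ∃ s : Finset (M n), s.card = k
        ∧ Submodule.span R (s : Set (M n)) = ⊤}.Nonempty := ⟨t0.card, t0, rfl, ht0⟩
    obtain ⟨t, htc, hts⟩ := Nat.sInf_mem hMne
    let g : M n → ↥(invLim f) := Function.surjInv hsurjp
    have hg : ∀ z, lproj f n (g z) = z := fun z => Function.surjInv_eq hsurjp z
    let u : Finset ↥(invLim f) := t.image g
    have hmap : Submodule.map (lproj f n) (Submodule.span R (↑u : Set ↥(invLim f))) = ⊤ := by
      rw [Submodule.map_span, Finset.coe_image, Set.image_image]
      have himg : (fun z => lproj f n (g z)) '' ↑t = ↑t := by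
        rw [Set.image_congr (fun z _ => hg z)]
        exact Set.image_id _
      rw [himg, hts]
    have husup : Submodule.span R (↑u : Set ↥(invLim f)) ⊔ a • ⊤ = ⊤ := by
      rw [eq_top_iff]
      intro z _
      have hz : lproj f n z ∈ Submodule.map (lproj f n) (Submodule.span R (↑u : Set ↥(invLim f))) := by
        rw [hmap]; trivial
      obtain ⟨w, hw, hwz⟩ := hz
      refine Submodule.mem_sup.2 ⟨w, hw, z - w, ?_, by abel⟩
      have hzw : z - w ∈ LinearMap.ker (lproj f n) := by
        rw [LinearMap.mem_ker, map_sub, hwz, sub_self]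
      rw [hkerp] at hzw
      exact Submodule.smul_mono_left (Ideal.pow_le_self (Nat.succ_ne_zero n)) hzw
    have huspan : Submodule.span R (↑u : Set ↥(invLim f)) = ⊤ := span_eq_top_of_sup a hH u husup
    have h1 : minGen R ↥(invLim f) ≤ minGen R (M n) := by
      calc minGen R ↥(invLim f) ≤ u.card := Nat.sInf_le ⟨u, rfl, huspan⟩
        _ ≤ t.card := Finset.card_image_le
        _ = minGen R (M n) := htc
    have hLne : {k | ∃ s : Finset ↥(invLim f), s.card = k
        ∧ Submodule.span R (s : Set ↥(invLim f)) = ⊤}.Nonempty := ⟨u.card, u, rfl, huspan⟩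
    have h2 : minGen R (M n) ≤ minGen R ↥(invLim f) := by
      obtain ⟨s0, hs0c, hs0⟩ := Nat.sInf_mem hLne
      have himg : Submodule.span R (↑(s0.image (lproj f n)) : Set (M n)) = ⊤ := by
        rw [Finset.coe_image, Submodule.span_image, hs0, Submodule.map_top,
          LinearMap.range_eq_top.2 hsurjp]
      calc minGen R (M n) ≤ (s0.image (lproj f n)).card := Nat.sInf_le ⟨_, rfl, himg⟩
        _ ≤ s0.card := Finset.card_image_le
        _ = minGen R ↥(invLim f) := hs0c
    exact le_antisymm h1 h2
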